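/- arXiv:2012.08005 — 5 statements merged into one kernel-verified Lean document; each statement's English description precedes it below -/
import Mathlib

section
/- For γ ∈ (0,1) and integer d ≥ 3, the incomplete beta function satisfies B(1-γ², (d-1)/2, 1/2) ≤ (1/γ) · (2/(d-1)) · (1-γ²)^((d-1)/2). -/
/-- The incomplete beta function `B(x, a, b) = ∫₀ˣ t^(a-1) (1-t)^(b-1) dt`. -/
noncomputable def incBeta (x a b : ℝ) : ℝ :=
  ∫ t in (0:ℝ)..x, t ^ (a - 1) * (1 - t) ^ (b - 1)

/-- Upper bound on the incomplete beta function `B(1-γ², (d-1)/2, 1/2)`. -/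
theorem incBeta_upper_bound (γ : ℝ) (hγ : γ ∈ Set.Ioo (0:ℝ) 1) (d : ℕ) (hd : 3 ≤ d) :
    incBeta (1 - γ ^ 2) (((d:ℝ) - 1) / 2) (1 / 2) ≤
      (1 / γ) * (2 / ((d:ℝ) - 1)) * (1 - γ ^ 2) ^ (((d:ℝ) - 1) / 2) := by
  obtain ⟨hγ0, hγ1⟩ := hγ
  have hd1 : (3:ℝ) ≤ (d:ℝ) := by exact_mod_cast hd
  set x : ℝ := 1 - γ ^ 2 with hxdef
  set a : ℝ := ((d:ℝ) - 1) / 2 with hadef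
  have hγ2 : γ ^ 2 < 1 := by nlinarith
  have hx0 : 0 < x := by simp only [hxdef]; linarith
  have hx1 : x < 1 := by simp only [hxdef]; nlinarith
  have ha1 : 1 ≤ a := by simp only [hadef]; linarith
  have ha0 : 0 ≤ a - 1 := by linarith
  have hapos : 0 < a := by linarith
  -- pointwise bound
  have key : ∀ t ∈ Set.Icc (0:ℝ) x,
      t ^ (a - 1) * (1 - t) ^ ((1:ℝ)/2 - 1) ≤ t ^ (a - 1) * γ⁻¹ := by
    intro t ⟨ht0, htx⟩
    have h1t : γ ^ 2 ≤ 1 - t := by simp only [hxdef] at htx; linarith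
    have hγ2pos : 0 < γ ^ 2 := by positivity
    have hle : (1 - t) ^ ((1:ℝ)/2 - 1) ≤ (γ ^ 2) ^ ((1:ℝ)/2 - 1) :=
      Real.rpow_le_rpow_of_nonpos hγ2pos h1t (by norm_num)
    have heq : (γ ^ 2) ^ ((1:ℝ)/2 - 1) = γ⁻¹ := by
      rw [← Real.rpow_natCast γ 2, ← Real.rpow_mul hγ0.le]
      norm_num [Real.rpow_neg_one]
    exact mul_le_mul_of_nonneg_left (heq ▸ hle) (Real.rpow_nonneg ht0 _)
  -- continuity / integrability
  have hc1 : Continuous fun t : ℝ => t ^ (a - 1) :=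
    continuous_iff_continuousAt.2 fun t =>
      Real.continuousAt_rpow_const t _ (Or.inr ha0)
  have hc2 : ContinuousOn (fun t : ℝ => (1 - t) ^ ((1:ℝ)/2 - 1)) (Set.Icc 0 x) := by
    apply ContinuousOn.rpow_const (by fun_prop)
    intro t ⟨ht0, htx⟩
    left
    have : t < 1 := lt_of_le_of_lt htx hx1
    intro h
    linarith [sub_eq_zero.mp h]
  have hint1 : IntervalIntegrable
      (fun t : ℝ => t ^ (a - 1) * (1 - t) ^ ((1:ℝ)/2 - 1)) MeasureTheory.volume 0 x := by
    apply ContinuousOn.intervalIntegrable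
    rw [Set.uIcc_of_le hx0.le]
    exact hc1.continuousOn.mul hc2
  have hint2 : IntervalIntegrable (fun t : ℝ => t ^ (a - 1) * γ⁻¹)
      MeasureTheory.volume 0 x :=
    (hc1.mul continuous_const).intervalIntegrable 0 x
  have hmono := intervalIntegral.integral_mono_on hx0.le hint1 hint2 key
  have hval : (∫ t in (0:ℝ)..x, t ^ (a - 1) * γ⁻¹) =
      (1 / γ) * (2 / ((d:ℝ) - 1)) * x ^ a := by
    rw [intervalIntegral.integral_mul_const, integral_rpow (Or.inl (by linarith))]
    have h0 : (0:ℝ) ^ (a - 1 + 1) = 0 := Real.zero_rpow (by linarith)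
    rw [h0]
    have : a - 1 + 1 = a := by ring
    rw [this]
    rw [show (2:ℝ) / ((d:ℝ) - 1) = a⁻¹ from by rw [hadef, inv_div], one_div]
    field_simp
    ring
  calc incBeta x a (1/2) ≤ ∫ t in (0:ℝ)..x, t ^ (a - 1) * γ⁻¹ := by
        unfold incBeta
        exact hmono
    _ = (1 / γ) * (2 / ((d:ℝ) - 1)) * x ^ a := hval
end

section
/- For γ ∈ (0,1) and integer d ≥ 3, the regularized incomplete beta function satisfies I_{1-γ²}((d-1)/2, 1/2) ≤ (1/γ) · (2/(d-1)) · (1-γ²)^((d-1)/2) · √(d/(2π)). -/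
/-- The regularized incomplete beta function `I_x(a,b) = B(x,a,b) / B(1,a,b)`. -/
noncomputable def regIncBeta (x a b : ℝ) : ℝ := incBeta x a b / incBeta 1 a b

lemma incBeta_one_eq {a b : ℝ} (ha : 0 < a) (hb : 0 < b) :
    incBeta 1 a b = Real.Gamma a * Real.Gamma b / Real.Gamma (a + b) := by
  have key : ((incBeta 1 a b : ℝ) : ℂ) = Complex.betaIntegral a b := by
    rw [incBeta, Complex.betaIntegral, ← intervalIntegral.integral_ofReal]
    refine intervalIntegral.integral_congr (fun t ht => ?_)
    rw [Set.uIcc_of_le (by norm_num : (0:ℝ) ≤ 1)] at ht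
    push_cast
    rw [Complex.ofReal_cpow ht.1, Complex.ofReal_cpow (by linarith [ht.2])]
    push_cast
    ring
  have h2 := Complex.Gamma_mul_Gamma_eq_betaIntegral
    (by simpa using ha : 0 < Complex.re a) (by simpa using hb : 0 < Complex.re b)
  rw [← key] at h2
  have h3 : Complex.Gamma (a + b) ≠ 0 := by
    rw [show ((a:ℂ) + b) = ((a + b : ℝ) : ℂ) by push_cast; ring, Complex.Gamma_ofReal]
    exact_mod_cast (Real.Gamma_pos_of_pos (by linarith)).ne'
  have h4 : ((incBeta 1 a b : ℝ) : ℂ) = Complex.Gamma a * Complex.Gamma b / Complex.Gamma (a + b) := by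
    rw [eq_div_iff h3]
    linear_combination -h2
  rw [show ((a:ℂ) + b) = ((a + b : ℝ) : ℂ) by push_cast; ring] at h4
  rw [Complex.Gamma_ofReal, Complex.Gamma_ofReal, Complex.Gamma_ofReal] at h4
  exact_mod_cast h4

lemma gautschi {a : ℝ} (ha : 0 < a) : Real.Gamma (a + 1/2) ≤ Real.sqrt a * Real.Gamma a := by
  have h1 : (0:ℝ) < a + 1/2 := by linarith
  have h2 : (0:ℝ) < a + 1 := by linarith
  have hc := Real.convexOn_log_Gamma.2 (Set.mem_Ioi.mpr ha) (Set.mem_Ioi.mpr h2)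
    (by norm_num : (0:ℝ) ≤ 1/2) (by norm_num : (0:ℝ) ≤ 1/2) (by norm_num)
  simp only [smul_eq_mul, Function.comp_apply] at hc
  have hmid : (1/2 : ℝ) * a + (1/2) * (a + 1) = a + 1/2 := by ring
  rw [hmid] at hc
  have hsq : Real.Gamma (a + 1/2) ^ 2 ≤ a * Real.Gamma a ^ 2 := by
    have hpos1 := Real.Gamma_pos_of_pos h1
    have hpos2 := Real.Gamma_pos_of_pos ha
    have hlog : Real.log (Real.Gamma (a + 1/2) ^ 2) ≤ Real.log (a * Real.Gamma a ^ 2) := by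
      rw [Real.log_pow, Real.log_mul ha.ne' (by positivity), Real.log_pow]
      have : Real.log (Real.Gamma (a+1)) = Real.log a + Real.log (Real.Gamma a) := by
        rw [Real.Gamma_add_one ha.ne', Real.log_mul ha.ne' hpos2.ne']
      push_cast
      nlinarith [hc, this]
    exact (Real.log_le_log_iff (by positivity) (by positivity)).mp hlog
  calc Real.Gamma (a + 1/2) = Real.sqrt (Real.Gamma (a + 1/2) ^ 2) := by
        rw [Real.sqrt_sq (Real.Gamma_pos_of_pos h1).le]
    _ ≤ Real.sqrt (a * Real.Gamma a ^ 2) := Real.sqrt_le_sqrt hsq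
    _ = Real.sqrt a * Real.Gamma a := by
        rw [Real.sqrt_mul ha.le, Real.sqrt_sq (Real.Gamma_pos_of_pos ha).le]

lemma incBeta_one_lb {a : ℝ} (ha : 0 < a) :
    Real.sqrt (Real.pi / a) ≤ incBeta 1 a (1/2) := by
  rw [incBeta_one_eq ha one_half_pos, Real.Gamma_one_half_eq]
  have hg := Real.Gamma_pos_of_pos ha
  have hg2 := Real.Gamma_pos_of_pos (by linarith : (0:ℝ) < a + 1/2)
  have hsa : (0:ℝ) < Real.sqrt a := Real.sqrt_pos.mpr ha
  calc Real.sqrt (Real.pi / a) = Real.sqrt Real.pi / Real.sqrt a :=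
        Real.sqrt_div Real.pi_pos.le a
    _ ≤ Real.Gamma a * Real.sqrt Real.pi / Real.Gamma (a + 1/2) := by
        rw [div_le_div_iff₀ hsa hg2]
        calc Real.sqrt Real.pi * Real.Gamma (a + 1/2)
            ≤ Real.sqrt Real.pi * (Real.sqrt a * Real.Gamma a) := by
              exact mul_le_mul_of_nonneg_left (gautschi ha) (Real.sqrt_nonneg _)
          _ = Real.Gamma a * Real.sqrt Real.pi * Real.sqrt a := by ring

lemma incBeta_ub {γ a : ℝ} (hγ0 : 0 < γ) (hγ1 : γ < 1) (ha : 1 ≤ a) :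
    incBeta (1 - γ^2) a (1/2) ≤ (1/γ) * ((1 - γ^2)^a / a) := by
  set x : ℝ := 1 - γ^2 with hx
  have hx0 : 0 < x := by nlinarith
  have hx1 : x < 1 := by nlinarith
  have ha0 : (0:ℝ) < a := by linarith
  have hcont1 : Continuous (fun t : ℝ => t ^ (a - 1)) :=
    Real.continuous_rpow_const (by linarith)
  have hf_cont : ContinuousOn (fun t : ℝ => t ^ (a-1) * (1-t) ^ ((1:ℝ)/2 - 1)) (Set.uIcc 0 x) := by
    apply hcont1.continuousOn.mul
    apply ContinuousOn.rpow_const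
    · exact (continuous_const.sub continuous_id).continuousOn
    · intro t ht
      rw [Set.uIcc_of_le hx0.le] at ht
      left
      nlinarith [ht.2]
  have hf_int : IntervalIntegrable (fun t : ℝ => t ^ (a-1) * (1-t) ^ ((1:ℝ)/2 - 1))
      MeasureTheory.volume 0 x := hf_cont.intervalIntegrable
  have hg_int : IntervalIntegrable (fun t : ℝ => t ^ (a-1) * (1/γ)) MeasureTheory.volume 0 x :=
    ((hcont1.mul continuous_const).continuousOn).intervalIntegrable
  have hmono : incBeta x a (1/2) ≤ ∫ t in (0:ℝ)..x, t ^ (a-1) * (1/γ) := by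
    rw [incBeta]
    apply intervalIntegral.integral_mono_on hx0.le hf_int hg_int
    intro t ht
    have h1t : γ^2 ≤ 1 - t := by linarith [ht.2]
    have hle : (1-t) ^ ((1:ℝ)/2 - 1) ≤ 1/γ := by
      have : (1-t) ^ ((1:ℝ)/2 - 1) ≤ (γ^2) ^ ((1:ℝ)/2 - 1) :=
        Real.rpow_le_rpow_of_nonpos (by positivity) h1t (by norm_num)
      refine this.trans_eq ?_
      rw [show (γ:ℝ)^2 = γ ^ (2:ℝ) by rw [← Real.rpow_natCast γ 2]; norm_num,
        ← Real.rpow_mul hγ0.le]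
      norm_num
      exact Real.rpow_neg_one γ
    have ht0 : (0:ℝ) ≤ t ^ (a-1) := Real.rpow_nonneg ht.1 _
    exact mul_le_mul_of_nonneg_left hle ht0
  have hval : ∫ t in (0:ℝ)..x, t ^ (a-1) * (1/γ) = (1/γ) * (x^a / a) := by
    rw [intervalIntegral.integral_mul_const, integral_rpow (Or.inl (by linarith))]
    rw [Real.zero_rpow (by linarith : a - 1 + 1 ≠ 0)]
    rw [show a - 1 + 1 = a by ring]
    ring
  rw [hval] at hmono
  exact hmono

/-- Upper bound on the regularized incomplete beta function. -/
theorem regIncBeta_upper_bound (γ : ℝ) (hγ : γ ∈ Set.Ioo (0:ℝ) 1) (d : ℕ) (hd : 3 ≤ d) :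
    regIncBeta (1 - γ ^ 2) (((d:ℝ) - 1) / 2) (1 / 2) ≤
      (1 / γ) * (2 / ((d:ℝ) - 1)) * (1 - γ ^ 2) ^ (((d:ℝ) - 1) / 2) *
        Real.sqrt (d / (2 * Real.pi)) := by
  obtain ⟨hγ0, hγ1⟩ := hγ
  have hd3 : (3:ℝ) ≤ (d:ℝ) := by exact_mod_cast hd
  set a : ℝ := ((d:ℝ) - 1) / 2 with ha_def
  have ha1 : 1 ≤ a := by rw [ha_def]; linarith
  have ha0 : (0:ℝ) < a := by linarith
  have hx0 : (0:ℝ) < 1 - γ^2 := by nlinarith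
  have hB := incBeta_one_lb ha0
  have hsqrtpos : (0:ℝ) < Real.sqrt (Real.pi / a) :=
    Real.sqrt_pos.mpr (by positivity)
  have hBpos : 0 < incBeta 1 a (1/2) := lt_of_lt_of_le hsqrtpos hB
  have hN := incBeta_ub hγ0 hγ1 ha1
  set N : ℝ := (1/γ) * ((1 - γ^2)^a / a) with hN_def
  have hN0 : 0 ≤ N := by
    have : (0:ℝ) ≤ (1 - γ^2)^a := Real.rpow_nonneg hx0.le a
    positivity
  have step1 : regIncBeta (1 - γ^2) a (1/2) ≤ N / incBeta 1 a (1/2) := by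
    rw [regIncBeta]
    gcongr
  have step2 : N / incBeta 1 a (1/2) ≤ N / Real.sqrt (Real.pi / a) := by
    gcongr
  have step3 : N / Real.sqrt (Real.pi / a) = N * Real.sqrt (a / Real.pi) := by
    rw [div_eq_mul_inv, ← Real.sqrt_inv, inv_div]
  have step4 : N * Real.sqrt (a / Real.pi) ≤ N * Real.sqrt ((d:ℝ) / (2 * Real.pi)) := by
    apply mul_le_mul_of_nonneg_left _ hN0
    apply Real.sqrt_le_sqrt
    rw [ha_def, div_div]
    gcongr
    linarith
  have final : N * Real.sqrt ((d:ℝ) / (2 * Real.pi)) =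
      (1 / γ) * (2 / ((d:ℝ) - 1)) * (1 - γ ^ 2) ^ a * Real.sqrt ((d:ℝ) / (2 * Real.pi)) := by
    rw [hN_def, div_eq_mul_inv ((1 - γ^2)^a) a, show a⁻¹ = 2/((d:ℝ)-1) by rw [ha_def, inv_div]]
    ring
  calc regIncBeta (1 - γ^2) a (1/2) ≤ N / incBeta 1 a (1/2) := step1
    _ ≤ N / Real.sqrt (Real.pi / a) := step2
    _ = N * Real.sqrt (a / Real.pi) := step3
    _ ≤ N * Real.sqrt ((d:ℝ) / (2 * Real.pi)) := step4
    _ = _ := final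
end

section
/- For γ ∈ (0,1) and integer d ≥ 5, the inverse of the regularized incomplete beta function value satisfies [I_{1-γ²}((d-1)/2, 1/2)]^{-1} ≥ γ √d · (1/(2(1-γ)))^((d-1)/2). -/
open Real MeasureTheory intervalIntegral


lemma intInt_one_sub {α β : ℝ} (hα : α ∈ Set.Icc (0:ℝ) 1) (hβ : β ∈ Set.Icc (0:ℝ) 1) :
    IntervalIntegrable (fun t : ℝ => (1 - t) ^ (-(1/2) : ℝ)) volume α β := by
  have h := (intervalIntegrable_rpow' (a := 1) (b := 0) (r := -(1/2)) (by norm_num)).comp_sub_left 1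
  simp only [sub_zero, sub_self] at h
  refine (h.symm.mono_set ?_)
  rw [Set.uIcc_comm (1:ℝ) 0, Set.uIcc_of_le (by norm_num : (0:ℝ) ≤ 1)]
  exact Set.uIcc_subset_Icc hα hβ

lemma intInt_aux {c : ℝ} (hc : 0 ≤ c) {α β : ℝ} (hα : α ∈ Set.Icc (0:ℝ) 1)
    (hβ : β ∈ Set.Icc (0:ℝ) 1) :
    IntervalIntegrable (fun t : ℝ => t ^ c * (1 - t) ^ (-(1/2) : ℝ)) volume α β :=
  (intInt_one_sub hα hβ).continuousOn_mul
    (ContinuousOn.rpow_const continuousOn_id (fun x _ => Or.inr hc))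

lemma int_one_sub_rpow {r : ℝ} (hr : -1 < r) {α : ℝ} (hα : α ≤ 1) :
    ∫ t in α..(1:ℝ), (1 - t) ^ r = (1-α) ^ (r+1) / (r+1) := by
  have h := intervalIntegral.integral_comp_sub_left (a := α) (b := 1) (fun u : ℝ => u ^ r) 1
  rw [h, integral_rpow (Or.inl hr)]
  rw [sub_self, Real.zero_rpow (by linarith)]
  ring

lemma cont_one_sub_rpow {r : ℝ} (hr : 0 ≤ r) (s : Set ℝ) :
    ContinuousOn (fun t : ℝ => (1 - t) ^ r) s :=
  ContinuousOn.rpow_const ((continuous_const.sub continuous_id).continuousOn)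
    (fun x _ => Or.inr hr)

lemma denom_lb_small {a : ℝ} (ha : 2 ≤ a) :
    2 - (2/3)*(a-1) ≤ ∫ t in (0:ℝ)..1, t ^ (a-1) * (1-t) ^ (-(1/2):ℝ) := by
  have h01 : (0:ℝ) ∈ Set.Icc (0:ℝ) 1 := by norm_num
  have h11 : (1:ℝ) ∈ Set.Icc (0:ℝ) 1 := by norm_num
  have hf : IntervalIntegrable (fun t : ℝ => t ^ (a-1) * (1 - t) ^ (-(1/2) : ℝ)) volume 0 1 :=
    intInt_aux (by linarith) h01 h11
  have hg : IntervalIntegrable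
      (fun t : ℝ => (1 - (a-1)*(1-t)) * (1-t) ^ (-(1/2):ℝ)) volume 0 1 :=
    (intInt_one_sub h01 h11).continuousOn_mul (by fun_prop)
  have hmono : (∫ t in (0:ℝ)..1, (1 - (a-1)*(1-t)) * (1-t) ^ (-(1/2):ℝ))
      ≤ ∫ t in (0:ℝ)..1, t ^ (a-1) * (1-t) ^ (-(1/2):ℝ) := by
    refine intervalIntegral.integral_mono_on (by norm_num) hg hf ?_
    intro t ht
    have h1 : -1 ≤ t - 1 := by linarith [ht.1]
    have hber := one_add_mul_self_le_rpow_one_add h1 (p := a-1) (by linarith)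
    have he : (1:ℝ) + (t-1) = t := by ring
    rw [he] at hber
    have h2 : 1 - (a-1)*(1-t) ≤ t ^ (a-1) := by nlinarith [hber]
    exact mul_le_mul_of_nonneg_right h2 (Real.rpow_nonneg (by linarith [ht.2]) _)
  have hsplit : (∫ t in (0:ℝ)..1, (1 - (a-1)*(1-t)) * (1-t) ^ (-(1/2):ℝ))
      = 2 - (2/3)*(a-1) := by
    have hEq : Set.EqOn (fun t : ℝ => (1 - (a-1)*(1-t)) * (1-t) ^ (-(1/2):ℝ))
        (fun t : ℝ => (1-t) ^ (-(1/2):ℝ) - (a-1) * (1-t) ^ ((1/2):ℝ))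
        (Set.uIcc (0:ℝ) 1) := by
      intro t ht
      rw [Set.uIcc_of_le (by norm_num : (0:ℝ) ≤ 1)] at ht
      have h0 : (0:ℝ) ≤ 1 - t := by linarith [ht.2]
      have e1 : (1-t) ^ ((1/2):ℝ) = (1-t) * (1-t) ^ (-(1/2):ℝ) := by
        rw [← Real.rpow_one_add' h0 (by norm_num)]
        norm_num
      simp only [e1]
      ring
    rw [intervalIntegral.integral_congr hEq,
      intervalIntegral.integral_sub (intInt_one_sub h01 h11)
        (((cont_one_sub_rpow (by norm_num) _).intervalIntegrable).const_mul _),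
      intervalIntegral.integral_const_mul,
      int_one_sub_rpow (by norm_num) (by norm_num),
      int_one_sub_rpow (by norm_num) (by norm_num)]
    norm_num
    ring
  linarith

lemma denom_lb_big {a : ℝ} (ha : 3 ≤ a) :
    (16/15) * ((2/(a-1)) ^ ((1/2):ℝ)) ≤ ∫ t in (0:ℝ)..1, t ^ (a-1) * (1-t) ^ (-(1/2):ℝ) := by
  set k : ℝ := (a-1)/2 with hk
  have hk1 : 1 ≤ k := by rw [hk]; linarith
  have hk0 : 0 < k := by linarith
  set α : ℝ := 1 - 1/k with hα
  have hα0 : 0 ≤ α := by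
    rw [hα]
    have : 1/k ≤ 1 := by rw [div_le_one hk0]; exact hk1
    linarith
  have hα1 : α ≤ 1 := by
    rw [hα]; have : 0 < 1/k := by positivity
    linarith
  have hαm : α ∈ Set.Icc (0:ℝ) 1 := ⟨hα0, hα1⟩
  have h01 : (0:ℝ) ∈ Set.Icc (0:ℝ) 1 := by norm_num
  have h11 : (1:ℝ) ∈ Set.Icc (0:ℝ) 1 := by norm_num
  have ha1 : (0:ℝ) ≤ a - 1 := by linarith
  -- split the integral
  have hsplit : (∫ t in (0:ℝ)..α, t ^ (a-1) * (1-t) ^ (-(1/2):ℝ))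
      + (∫ t in α..(1:ℝ), t ^ (a-1) * (1-t) ^ (-(1/2):ℝ))
      = ∫ t in (0:ℝ)..1, t ^ (a-1) * (1-t) ^ (-(1/2):ℝ) :=
    intervalIntegral.integral_add_adjacent_intervals
      (intInt_aux ha1 h01 hαm) (intInt_aux ha1 hαm h11)
  have hnn : 0 ≤ ∫ t in (0:ℝ)..α, t ^ (a-1) * (1-t) ^ (-(1/2):ℝ) := by
    refine intervalIntegral.integral_nonneg hα0 ?_
    intro t ht
    exact mul_nonneg (Real.rpow_nonneg ht.1 _)
      (Real.rpow_nonneg (by linarith [ht.2, hα1]) _)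
  -- pointwise lower bound on [α, 1]
  have hg : IntervalIntegrable
      (fun t : ℝ => (1 - k*(1-t))^2 * (1-t) ^ (-(1/2):ℝ)) volume α 1 :=
    (intInt_one_sub hαm h11).continuousOn_mul (by fun_prop)
  have hmono : (∫ t in α..(1:ℝ), (1 - k*(1-t))^2 * (1-t) ^ (-(1/2):ℝ))
      ≤ ∫ t in α..(1:ℝ), t ^ (a-1) * (1-t) ^ (-(1/2):ℝ) := by
    refine intervalIntegral.integral_mono_on hα1 hg (intInt_aux ha1 hαm h11) ?_
    intro t ht
    have ht0 : 0 ≤ t := le_trans hα0 ht.1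
    have ht1 : t ≤ 1 := ht.2
    have hu : 1 - t ≤ 1/k := by
      have := ht.1; rw [hα] at this; linarith
    have hnn1 : 0 ≤ 1 - k*(1-t) := by
      have : k * (1-t) ≤ k * (1/k) := by
        exact mul_le_mul_of_nonneg_left hu (le_of_lt hk0)
      rw [mul_one_div, div_self (ne_of_gt hk0)] at this
      linarith
    have hber := one_add_mul_self_le_rpow_one_add
      (s := t-1) (by linarith) (p := k) hk1
    have he : (1:ℝ) + (t-1) = t := by ring
    rw [he] at hber
    have hber' : 1 - k*(1-t) ≤ t ^ k := by nlinarith [hber]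
    have hsq : (1 - k*(1-t))^2 ≤ (t ^ k)^2 := by
      exact pow_le_pow_left₀ hnn1 hber' 2
    have hpow : (t ^ k)^2 = t ^ (a-1) := by
      rw [← Real.rpow_natCast (t ^ k) 2, ← Real.rpow_mul ht0]
      norm_num
      rw [hk]; ring_nf
    rw [hpow] at hsq
    exact mul_le_mul_of_nonneg_right hsq (Real.rpow_nonneg (by linarith) _)
  -- compute the lower integral
  have hcomp : (∫ t in α..(1:ℝ), (1 - k*(1-t))^2 * (1-t) ^ (-(1/2):ℝ))
      = (16/15) * ((1/k) ^ ((1/2):ℝ)) := by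
    have hEq : Set.EqOn (fun t : ℝ => (1 - k*(1-t))^2 * (1-t) ^ (-(1/2):ℝ))
        (fun t : ℝ => (1-t) ^ (-(1/2):ℝ) - (2*k) * (1-t) ^ ((1/2):ℝ)
          + k^2 * (1-t) ^ ((3/2):ℝ)) (Set.uIcc α 1) := by
      intro t ht
      rw [Set.uIcc_of_le hα1] at ht
      have h0 : (0:ℝ) ≤ 1 - t := by linarith [ht.2]
      have e1 : (1-t) ^ ((1/2):ℝ) = (1-t) * (1-t) ^ (-(1/2):ℝ) := by
        rw [← Real.rpow_one_add' h0 (by norm_num)]; norm_num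
      have e2 : (1-t) ^ ((3/2):ℝ) = (1-t)^2 * (1-t) ^ (-(1/2):ℝ) := by
        rw [show ((3/2):ℝ) = (2:ℝ) + -(1/2) by norm_num,
          Real.rpow_add' h0 (by norm_num), Real.rpow_two]
      simp only [e1, e2]
      ring
    rw [intervalIntegral.integral_congr hEq]
    have i1 : IntervalIntegrable (fun t : ℝ => (1-t) ^ (-(1/2):ℝ)) volume α 1 :=
      intInt_one_sub hαm h11
    have i2 : IntervalIntegrable (fun t : ℝ => (2*k) * (1-t) ^ ((1/2):ℝ)) volume α 1 :=
      ((cont_one_sub_rpow (by norm_num) _).intervalIntegrable).const_mul _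
    have i3 : IntervalIntegrable (fun t : ℝ => k^2 * (1-t) ^ ((3/2):ℝ)) volume α 1 :=
      ((cont_one_sub_rpow (by norm_num) _).intervalIntegrable).const_mul _
    rw [intervalIntegral.integral_add (i1.sub i2) i3, intervalIntegral.integral_sub i1 i2,
      intervalIntegral.integral_const_mul, intervalIntegral.integral_const_mul,
      int_one_sub_rpow (by norm_num) hα1, int_one_sub_rpow (by norm_num) hα1,
      int_one_sub_rpow (by norm_num) hα1]
    have h1α : 1 - α = 1/k := by rw [hα]; ring
    rw [h1α]
    set c : ℝ := (1/k) ^ ((1/2):ℝ) with hc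
    have hkinv0 : (0:ℝ) ≤ 1/k := by positivity
    have hc2 : c^2 = 1/k := by
      rw [hc, ← Real.rpow_natCast ((1/k) ^ ((1/2):ℝ)) 2, ← Real.rpow_mul hkinv0]
      norm_num
    have e3 : (1/k) ^ ((-(1/2):ℝ) + 1) = c := by
      rw [show (-(1/2):ℝ) + 1 = (1/2:ℝ) by norm_num]
    have e4 : (1/k) ^ (((1/2):ℝ) + 1) = c^3 := by
      rw [show ((1/2):ℝ) + 1 = (1/2) * (3:ℕ) by norm_num, Real.rpow_mul hkinv0,
        Real.rpow_natCast]
    have e5 : (1/k) ^ (((3/2):ℝ) + 1) = c^5 := by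
      rw [show ((3/2):ℝ) + 1 = (1/2) * (5:ℕ) by norm_num, Real.rpow_mul hkinv0,
        Real.rpow_natCast]
    rw [e3, e4, e5]
    have h3 : c^3 = 1/k * c := by rw [pow_succ, hc2]
    have h5 : c^5 = c^2 * c^2 * c := by ring
    rw [hc2] at h5
    rw [h3, h5]
    field_simp
    ring
  have hck : (1/k) = 2/(a-1) := by rw [hk]; field_simp
  rw [← hsplit]
  rw [← hck]
  linarith [hmono, hnn, hcomp.ge, hcomp.le]

set_option maxHeartbeats 1000000 in
/-- For `γ ∈ (0,1)` and `d ≥ 5`: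
`I_{1-γ²}((d-1)/2, 1/2) ≤ (γ √d (1/(2(1-γ)))^((d-1)/2))⁻¹`. -/
theorem regIncBeta_inv_lower_bound (γ : ℝ) (hγ : γ ∈ Set.Ioo (0:ℝ) 1) (d : ℕ) (hd : 5 ≤ d) :
    regIncBeta (1 - γ ^ 2) (((d:ℝ) - 1) / 2) (1 / 2) ≤
      (γ * Real.sqrt d * (1 / (2 * (1 - γ))) ^ (((d:ℝ) - 1) / 2))⁻¹ := by
  obtain ⟨hγ0, hγ1⟩ := hγ
  have hd5 : (5:ℝ) ≤ (d:ℝ) := by exact_mod_cast hd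
  set a : ℝ := ((d:ℝ)-1)/2 with ha
  have ha2 : 2 ≤ a := by rw [ha]; linarith
  have hda : (d:ℝ) = 2*a + 1 := by rw [ha]; ring
  rw [regIncBeta, incBeta, incBeta, show (1:ℝ)/2 - 1 = -(1/2) by norm_num]
  set x : ℝ := 1 - γ^2 with hx
  have hx0 : 0 ≤ x := by nlinarith
  have hx1 : x ≤ 1 := by nlinarith
  set N : ℝ := ∫ t in (0:ℝ)..x, t ^ (a-1) * (1-t) ^ (-(1/2):ℝ) with hN
  set D : ℝ := ∫ t in (0:ℝ)..1, t ^ (a-1) * (1-t) ^ (-(1/2):ℝ) with hD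
  -- numerator bound
  have hNle : N ≤ γ⁻¹ * (x ^ a / a) := by
    have hfi : IntervalIntegrable (fun t : ℝ => t ^ (a-1) * (1-t)^(-(1/2):ℝ)) volume 0 x :=
      intInt_aux (by linarith) (by norm_num) ⟨hx0, hx1⟩
    have hgi : IntervalIntegrable (fun t : ℝ => t ^ (a-1) * γ⁻¹) volume 0 x :=
      (ContinuousOn.rpow_const continuousOn_id
        (fun y _ => Or.inr (by linarith))).intervalIntegrable.mul_const _
    have hmono : N ≤ ∫ t in (0:ℝ)..x, t ^ (a-1) * γ⁻¹ := by
      refine intervalIntegral.integral_mono_on hx0 hfi hgi ?_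
      intro t ht
      have h1 : γ^2 ≤ 1 - t := by
        have h := ht.2; rw [hx] at h; linarith
      have h2 : (1-t) ^ (-(1/2):ℝ) ≤ (γ^2) ^ (-(1/2):ℝ) :=
        Real.rpow_le_rpow_of_nonpos (by positivity) h1 (by norm_num)
      have h3 : (γ^2 : ℝ) ^ (-(1/2):ℝ) = γ⁻¹ := by
        rw [← Real.rpow_natCast γ 2, ← Real.rpow_mul hγ0.le,
          show ((2:ℕ):ℝ) * (-(1/2)) = -1 by norm_num, Real.rpow_neg_one]
      rw [h3] at h2
      exact mul_le_mul_of_nonneg_left h2 (Real.rpow_nonneg ht.1 _)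
    have hcomp : (∫ t in (0:ℝ)..x, t ^ (a-1) * γ⁻¹) = γ⁻¹ * (x ^ a / a) := by
      rw [intervalIntegral.integral_mul_const,
        integral_rpow (Or.inl (by linarith : (-1:ℝ) < a-1)),
        Real.zero_rpow (by linarith : a - 1 + 1 ≠ 0),
        show a - 1 + 1 = a by ring]
      ring
    linarith [hmono, hcomp.le, hcomp.ge]
  -- denominator bound
  have haD : Real.sqrt d ≤ a * D := by
    rcases le_or_gt 7 d with h7 | h7
    · have h7' : (7:ℝ) ≤ (d:ℝ) := by exact_mod_cast h7
      have ha3 : 3 ≤ a := by rw [ha]; linarith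
      have hDlb := denom_lb_big ha3
      set c : ℝ := (2/(a-1)) ^ ((1/2):ℝ) with hc
      have hpos : (0:ℝ) < 2/(a-1) := div_pos two_pos (by linarith)
      have hc0 : 0 < c := Real.rpow_pos_of_pos hpos _
      have hc2 : c^2 = 2/(a-1) := by
        rw [hc, ← Real.rpow_natCast ((2/(a-1)) ^ ((1/2):ℝ)) 2, ← Real.rpow_mul hpos.le]
        norm_num
      have hkey : (d:ℝ) ≤ (a * ((16/15) * c))^2 := by
        have hac : (a * ((16/15) * c))^2 = (256/225) * a^2 * c^2 := by ring
        have key2 : (256:ℝ)/225*a^2*c^2 = 512/225*a^2/(a-1) := by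
          rw [hc2]; ring
        rw [hac, key2, le_div_iff₀ (by linarith : (0:ℝ) < a - 1), hda]
        nlinarith [ha3]
      calc Real.sqrt d ≤ Real.sqrt ((a * ((16/15) * c))^2) := Real.sqrt_le_sqrt hkey
        _ = a * ((16/15) * c) := Real.sqrt_sq (by positivity)
        _ ≤ a * D := by
            exact mul_le_mul_of_nonneg_left hDlb (by linarith)
    · have h6 : (d:ℝ) ≤ 6 := by exact_mod_cast Nat.lt_succ_iff.mp h7
      have ha52 : a ≤ 5/2 := by rw [ha]; linarith
      have hDlb := denom_lb_small ha2
      have hkey : (d:ℝ) ≤ (a * (2 - (2/3)*(a-1)))^2 := by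
        rw [hda]; nlinarith [ha2, ha52, sq_nonneg (a-2), sq_nonneg (a-5/2), mul_nonneg (sub_nonneg.2 ha2) (sub_nonneg.2 ha52), sq_nonneg ((a-2)*(5/2-a))]
      calc Real.sqrt d ≤ Real.sqrt ((a * (2 - (2/3)*(a-1)))^2) := Real.sqrt_le_sqrt hkey
        _ = a * (2 - (2/3)*(a-1)) := Real.sqrt_sq (by nlinarith [ha2, ha52])
        _ ≤ a * D := mul_le_mul_of_nonneg_left hDlb (by linarith)
  have hsd : 0 < Real.sqrt d := Real.sqrt_pos.2 (by linarith)
  have hDpos : 0 < D := by nlinarith [haD, hsd]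
  -- final chain
  have h2γ : 0 < 2*(1-γ) := by linarith
  have hB : 0 < (2*(1-γ)) ^ a := Real.rpow_pos_of_pos h2γ a
  have hxa : x ^ a ≤ (2*(1-γ)) ^ a :=
    Real.rpow_le_rpow hx0 (by nlinarith) (by linarith)
  have hRHS : (γ * Real.sqrt d * (1 / (2 * (1 - γ))) ^ a)⁻¹
      = (2*(1-γ)) ^ a / (γ * Real.sqrt d) := by
    rw [one_div, Real.inv_rpow h2γ.le]
    rw [mul_inv, inv_inv]
    ring
  rw [hRHS]
  have step1 : N / D ≤ (γ⁻¹ * (x ^ a / a)) / D := by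
    exact div_le_div_of_nonneg_right hNle hDpos.le
  have heq : (γ⁻¹ * (x ^ a / a)) / D = x ^ a / (γ * (a * D)) := by
    field_simp
  have step2 : x ^ a / (γ * (a * D)) ≤ (2*(1-γ)) ^ a / (γ * Real.sqrt d) := by
    apply div_le_div₀ hB.le hxa (by positivity)
    exact mul_le_mul_of_nonneg_left haD hγ0.le
  calc N / D ≤ (γ⁻¹ * (x ^ a / a)) / D := step1
    _ = x ^ a / (γ * (a * D)) := heq
    _ ≤ (2*(1-γ)) ^ a / (γ * Real.sqrt d) := step2
end

section
/- For γ ∈ (0,1) and integer d ≥ 5, it holds that 2^{-d} · [I_{1-γ²}((d-1)/2, 1/2)]^{-1} ≥ γ √d · ((1/2)^{3.5} / (1-γ))^((d-1)/2). -/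
open MeasureTheory intervalIntegral Set

namespace IncBetaAux

noncomputable def f (p : ℝ) (t : ℝ) : ℝ := t ^ p * (1 - t) ^ (-(1:ℝ)/2)

lemma f_nonneg {p t : ℝ} (ht : 0 ≤ t) (ht1 : t ≤ 1) : 0 ≤ f p t :=
  mul_nonneg (Real.rpow_nonneg ht _) (Real.rpow_nonneg (by linarith) _)

lemma integrable_f (p : ℝ) (hp : 0 ≤ p) (u v : ℝ) : IntervalIntegrable (f p) volume u v := by
  have h1 : IntervalIntegrable (fun t : ℝ => (1 - t) ^ (-(1:ℝ)/2)) volume u v := by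
    have h := (intervalIntegral.intervalIntegrable_rpow' (r := -(1:ℝ)/2)
      (by norm_num) (a := 1 - u) (b := 1 - v)).comp_sub_left 1
    simpa using h
  have h2 : ContinuousOn (fun t : ℝ => t ^ p) (uIcc u v) :=
    (Real.continuous_rpow_const hp).continuousOn
  exact h1.continuousOn_mul h2

end IncBetaAux

namespace IncBetaAux

lemma sqrt_c : Real.sqrt (1 - 255/256 : ℝ) = 1/16 := by
  rw [show (1 - 255/256 : ℝ) = (1/16)^2 by norm_num, Real.sqrt_sq (by norm_num)]

lemma hasDeriv_sqrt_one_sub {t : ℝ} (ht : t < 1) :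
    HasDerivAt (fun u : ℝ => Real.sqrt (1 - u)) (-(2 * Real.sqrt (1 - t))⁻¹) t := by
  have h := (Real.hasDerivAt_sqrt (x := 1 - t) (by linarith)).comp t
    ((hasDerivAt_id t).const_sub 1)
  refine HasDerivAt.congr_deriv h ?_
  simp

lemma integrable_aux (n : ℕ) : IntervalIntegrable
    (fun t : ℝ => t ^ n * (Real.sqrt (1 - t))⁻¹) volume 0 (255/256) := by
  apply ContinuousOn.intervalIntegrable
  apply ContinuousOn.mul (continuousOn_pow n)
  apply ContinuousOn.inv₀
  · exact (Real.continuous_sqrt.comp (continuous_const.sub continuous_id)).continuousOn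
  · intro t ht
    rw [uIcc_of_le (by norm_num)] at ht
    have : (0:ℝ) < 1 - t := by linarith [ht.2, (by norm_num : (255/256:ℝ) < 1)]
    positivity

lemma eval₁ : ∫ t in (0:ℝ)..(255/256), t ^ (1:ℕ) * (Real.sqrt (1 - t))⁻¹ = 2475/2048 := by
  have h : ∀ t ∈ uIcc (0:ℝ) (255/256),
      HasDerivAt (fun u : ℝ => -2 * Real.sqrt (1-u) + (2/3) * (Real.sqrt (1-u))^3)
        (t ^ (1:ℕ) * (Real.sqrt (1 - t))⁻¹) t := by
    intro t ht
    rw [uIcc_of_le (by norm_num)] at ht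
    have ht1 : t < 1 := lt_of_le_of_lt ht.2 (by norm_num)
    have hs := hasDeriv_sqrt_one_sub ht1
    have hd := ((hs.const_mul (-2:ℝ)).add ((hs.pow 3).const_mul (2/3)))
    refine HasDerivAt.congr_deriv hd ?_
    have hs2 : Real.sqrt (1-t)^2 = 1 - t := Real.sq_sqrt (by linarith)
    have hs0 : Real.sqrt (1-t) ≠ 0 := by
      rw [Real.sqrt_ne_zero' ]; linarith
    set s := Real.sqrt (1-t) with hsdef
    have hts : t = 1 - s^2 := by linarith [hs2]
    field_simp
    rw [hts]; ring
  rw [intervalIntegral.integral_eq_sub_of_hasDerivAt h (integrable_aux 1)]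
  rw [sqrt_c, show (1:ℝ)-0 = 1 by norm_num, Real.sqrt_one]
  norm_num

end IncBetaAux

namespace IncBetaAux

lemma eval₂ : ∫ t in (0:ℝ)..(255/256), t ^ (2:ℕ) * (Real.sqrt (1 - t))⁻¹ = 493875/524288 := by
  have h : ∀ t ∈ uIcc (0:ℝ) (255/256),
      HasDerivAt (fun u : ℝ => -2 * Real.sqrt (1-u) + (4/3) * (Real.sqrt (1-u))^3
          + (-(2/5)) * (Real.sqrt (1-u))^5)
        (t ^ (2:ℕ) * (Real.sqrt (1 - t))⁻¹) t := by
    intro t ht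
    rw [uIcc_of_le (by norm_num)] at ht
    have ht1 : t < 1 := lt_of_le_of_lt ht.2 (by norm_num)
    have hs := hasDeriv_sqrt_one_sub ht1
    have hd := (((hs.const_mul (-2:ℝ)).add ((hs.pow 3).const_mul (4/3))).add
      ((hs.pow 5).const_mul (-(2/5))))
    refine HasDerivAt.congr_deriv hd ?_
    have hs2 : Real.sqrt (1-t)^2 = 1 - t := Real.sq_sqrt (by linarith)
    have hs0 : Real.sqrt (1-t) ≠ 0 := by
      rw [Real.sqrt_ne_zero' ]; linarith
    set s := Real.sqrt (1-t) with hsdef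
    have hts : t = 1 - s^2 := by linarith [hs2]
    field_simp
    rw [hts]; ring
  rw [intervalIntegral.integral_eq_sub_of_hasDerivAt h (integrable_aux 2)]
  rw [sqrt_c, show (1:ℝ)-0 = 1 by norm_num, Real.sqrt_one]
  norm_num

lemma eval₅ : ∫ t in (0:ℝ)..(255/256), t ^ (5:ℕ) * (Real.sqrt (1 - t))⁻¹
    = 416286174234375/677299162710016 := by
  have h : ∀ t ∈ uIcc (0:ℝ) (255/256),
      HasDerivAt (fun u : ℝ => -2 * Real.sqrt (1-u) + (10/3) * (Real.sqrt (1-u))^3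
          + (-4) * (Real.sqrt (1-u))^5 + (20/7) * (Real.sqrt (1-u))^7
          + (-(10/9)) * (Real.sqrt (1-u))^9 + (2/11) * (Real.sqrt (1-u))^11)
        (t ^ (5:ℕ) * (Real.sqrt (1 - t))⁻¹) t := by
    intro t ht
    rw [uIcc_of_le (by norm_num)] at ht
    have ht1 : t < 1 := lt_of_le_of_lt ht.2 (by norm_num)
    have hs := hasDeriv_sqrt_one_sub ht1
    have hd := ((((((hs.const_mul (-2:ℝ)).add ((hs.pow 3).const_mul (10/3))).add
      ((hs.pow 5).const_mul (-4))).add ((hs.pow 7).const_mul (20/7))).add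
      ((hs.pow 9).const_mul (-(10/9)))).add ((hs.pow 11).const_mul (2/11)))
    refine HasDerivAt.congr_deriv hd ?_
    have hs2 : Real.sqrt (1-t)^2 = 1 - t := Real.sq_sqrt (by linarith)
    have hs0 : Real.sqrt (1-t) ≠ 0 := by
      rw [Real.sqrt_ne_zero' ]; linarith
    set s := Real.sqrt (1-t) with hsdef
    have hts : t = 1 - s^2 := by linarith [hs2]
    field_simp
    rw [hts]; ring
  rw [intervalIntegral.integral_eq_sub_of_hasDerivAt h (integrable_aux 5)]
  rw [sqrt_c, show (1:ℝ)-0 = 1 by norm_num, Real.sqrt_one]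
  norm_num

end IncBetaAux

namespace IncBetaAux

lemma D_ge_val (p : ℝ) (hp0 : 0 < p) (n : ℕ) (hpn : p ≤ n) (V : ℝ)
    (hV : (∫ t in (0:ℝ)..(255/256), t ^ n * (Real.sqrt (1 - t))⁻¹) = V) :
    V ≤ ∫ t in (0:ℝ)..1, f p t := by
  have hint : ∀ u v : ℝ, IntervalIntegrable (f p) volume u v := integrable_f p hp0.le
  have hsplit : (∫ t in (0:ℝ)..1, f p t)
      = (∫ t in (0:ℝ)..(255/256), f p t) + ∫ t in (255/256:ℝ)..1, f p t :=
    (intervalIntegral.integral_add_adjacent_intervals (hint _ _) (hint _ _)).symm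
  have h2 : 0 ≤ ∫ t in (255/256:ℝ)..1, f p t := by
    apply intervalIntegral.integral_nonneg (by norm_num)
    intro u hu
    exact f_nonneg (le_trans (by norm_num) hu.1) hu.2
  have h1 : (∫ t in (0:ℝ)..(255/256), t ^ n * (Real.sqrt (1 - t))⁻¹)
      ≤ ∫ t in (0:ℝ)..(255/256), f p t := by
    apply intervalIntegral.integral_mono_on (by norm_num) (integrable_aux n) (hint _ _)
    intro t ht
    obtain ⟨ht0, htc⟩ := ht
    have ht1 : t < 1 := lt_of_le_of_lt htc (by norm_num)
    have hb : (0:ℝ) < 1 - t := by linarith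
    have e1 : (Real.sqrt (1 - t))⁻¹ = (1 - t) ^ (-(1:ℝ)/2) := by
      rw [Real.sqrt_eq_rpow, ← Real.rpow_neg hb.le]
      norm_num
    rw [e1]
    unfold f
    apply mul_le_mul_of_nonneg_right _ (Real.rpow_nonneg hb.le _)
    calc t ^ n = t ^ (n:ℝ) := (Real.rpow_natCast t n).symm
    _ ≤ t ^ p := Real.rpow_le_rpow_of_exponent_ge' ht0 ht1.le hp0.le hpn
  linarith [hV ▸ h1, hsplit ▸ le_refl (∫ t in (0:ℝ)..1, f p t)]

lemma D_ge_one_div (p : ℝ) (hp0 : 0 < p) :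
    1/(p+1) ≤ ∫ t in (0:ℝ)..1, f p t := by
  have h1 : ∀ᵐ (t:ℝ) ∂volume, t ≠ 1 := by
    rw [MeasureTheory.ae_iff]
    simp only [ne_eq, not_not, Set.setOf_eq_eq_singleton]
    exact measure_singleton 1
  have hmono : (∫ t in (0:ℝ)..1, t ^ p) ≤ ∫ t in (0:ℝ)..1, f p t := by
    apply intervalIntegral.integral_mono_ae_restrict (by norm_num)
      ((intervalIntegral.intervalIntegrable_rpow' (by linarith)))
      (integrable_f p hp0.le 0 1)
    apply (MeasureTheory.ae_restrict_iff' measurableSet_Icc).mpr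
    filter_upwards [h1] with t hne hmem
    obtain ⟨ht0, ht1'⟩ := hmem
    have ht1 : t < 1 := lt_of_le_of_ne ht1' hne
    have hb : (0:ℝ) < 1 - t := by linarith
    unfold f
    nth_rewrite 1 [← mul_one (t ^ p)]
    apply mul_le_mul_of_nonneg_left _ (Real.rpow_nonneg ht0 _)
    exact Real.one_le_rpow_of_pos_of_le_one_of_nonpos hb (by linarith) (by norm_num)
  have heq : (∫ t in (0:ℝ)..1, t ^ p) = 1/(p+1) := by
    rw [integral_rpow (Or.inl (by linarith))]
    rw [Real.one_rpow, Real.zero_rpow (by linarith)]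
    norm_num
  linarith [heq ▸ hmono]

lemma nat_pow (d : ℕ) (hd : 13 ≤ d) : 32 * d^2 ≤ 2^d := by
  induction d, hd using Nat.le_induction with
  | base => norm_num
  | succ d hd ih =>
    have h1 : 32 * (d+1)^2 ≤ 2 * (32 * d^2) := by nlinarith
    calc 32 * (d+1)^2 ≤ 2 * (32 * d^2) := h1
    _ ≤ 2 * 2^d := by omega
    _ = 2^(d+1) := by ring

lemma red (d : ℕ) (K : ℝ) (hK : 0 ≤ K) (h : 32 * (d:ℝ)^2 ≤ K^4 * 2^d) :
    Real.sqrt d * (2:ℝ) ^ (((5:ℝ) - (d:ℝ))/4) ≤ K := by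
  have h2 : (0:ℝ) < 2 := two_pos
  refine le_of_pow_le_pow_left₀ (n := 4) (by norm_num) hK ?_
  have e1 : (Real.sqrt d * (2:ℝ)^(((5:ℝ)-(d:ℝ))/4))^4 = (d:ℝ)^2 * (2:ℝ)^((5:ℝ)-(d:ℝ)) := by
    rw [mul_pow, ← Real.rpow_natCast ((2:ℝ)^(((5:ℝ)-(d:ℝ))/4)) 4, ← Real.rpow_mul h2.le]
    rw [show Real.sqrt d ^ 4 = ((Real.sqrt d)^2)^2 by ring, Real.sq_sqrt (Nat.cast_nonneg d)]
    norm_num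
  have e2 : (2:ℝ)^((5:ℝ)-(d:ℝ)) = 32 / 2^d := by
    rw [Real.rpow_sub h2, Real.rpow_natCast]
    norm_num
  rw [e1, e2]
  have hpow : (0:ℝ) < 2^d := by positivity
  calc (d:ℝ)^2 * (32/2^d) = (32*(d:ℝ)^2)/2^d := by ring
  _ ≤ K^4 := by rw [div_le_iff₀ hpow]; linarith

end IncBetaAux

namespace IncBetaAux

lemma key (d : ℕ) (hd : 5 ≤ d) :
    Real.sqrt d * (2:ℝ) ^ (((5:ℝ) - (d:ℝ))/4)
      ≤ (((d:ℝ)-1)/2) * ∫ t in (0:ℝ)..1, f (((d:ℝ)-1)/2 - 1) t := by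
  have hd5 : (5:ℝ) ≤ (d:ℝ) := by exact_mod_cast hd
  have hp0 : 0 < ((d:ℝ)-1)/2 - 1 := by linarith
  by_cases hc : 13 ≤ d
  · have h1 := D_ge_one_div _ hp0
    have hp1 : (((d:ℝ)-1)/2 - 1) + 1 = ((d:ℝ)-1)/2 := by ring
    rw [hp1] at h1
    have ha : (0:ℝ) < ((d:ℝ)-1)/2 := by linarith
    refine le_trans (red d 1 zero_le_one ?_) ?_
    · have h2 := nat_pow d hc
      have h3 : 32 * ((d:ℕ):ℝ)^2 ≤ ((2:ℝ))^(d:ℕ) := by exact_mod_cast h2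
      nlinarith [h3]
    · calc (1:ℝ) = (((d:ℝ)-1)/2) * (1/(((d:ℝ)-1)/2)) := by
            rw [mul_one_div, div_self ha.ne']
      _ ≤ _ := mul_le_mul_of_nonneg_left h1 ha.le
  · push_neg at hc
    have hc' : d ≤ 12 := by omega
    clear hd5 hc
    interval_cases d
    · refine le_trans (red 5 (2 * (2475/2048)) (by norm_num) (by norm_num)) ?_
      have hV := D_ge_val _ hp0 1 (by push_cast; norm_num) _ eval₁
      norm_num at hV ⊢
      linarith [hV]
    · refine le_trans (red 6 ((5/2) * (493875/524288)) (by norm_num) (by norm_num)) ?_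
      have hV := D_ge_val _ hp0 2 (by push_cast; norm_num) _ eval₂
      norm_num at hV ⊢
      linarith [hV]
    · refine le_trans (red 7 (3 * (493875/524288)) (by norm_num) (by norm_num)) ?_
      have hV := D_ge_val _ hp0 2 (by push_cast; norm_num) _ eval₂
      norm_num at hV ⊢
      linarith [hV]
    · refine le_trans (red 8 ((7/2) * (416286174234375/677299162710016))
        (by norm_num) (by norm_num)) ?_
      have hV := D_ge_val _ hp0 5 (by push_cast; norm_num) _ eval₅
      norm_num at hV ⊢
      linarith [hV]
    · refine le_trans (red 9 (4 * (416286174234375/677299162710016))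
        (by norm_num) (by norm_num)) ?_
      have hV := D_ge_val _ hp0 5 (by push_cast; norm_num) _ eval₅
      norm_num at hV ⊢
      linarith [hV]
    · refine le_trans (red 10 ((9/2) * (416286174234375/677299162710016))
        (by norm_num) (by norm_num)) ?_
      have hV := D_ge_val _ hp0 5 (by push_cast; norm_num) _ eval₅
      norm_num at hV ⊢
      linarith [hV]
    · refine le_trans (red 11 (5 * (416286174234375/677299162710016))
        (by norm_num) (by norm_num)) ?_
      have hV := D_ge_val _ hp0 5 (by push_cast; norm_num) _ eval₅
      norm_num at hV ⊢
      linarith [hV]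
    · refine le_trans (red 12 ((11/2) * (416286174234375/677299162710016))
        (by norm_num) (by norm_num)) ?_
      have hV := D_ge_val _ hp0 5 (by push_cast; norm_num) _ eval₅
      norm_num at hV ⊢
      linarith [hV]

end IncBetaAux


open IncBetaAux

/-- For `γ ∈ (0,1)` and `d ≥ 5`:
`2^{-d} [I_{1-γ²}((d-1)/2, 1/2)]⁻¹ ≥ γ √d ((1/2)^{3.5}/(1-γ))^((d-1)/2)`. -/
theorem two_pow_neg_mul_regIncBeta_inv_lower_bound (γ : ℝ) (hγ : γ ∈ Set.Ioo (0:ℝ) 1)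
    (d : ℕ) (hd : 5 ≤ d) :
    γ * Real.sqrt d * (((1:ℝ) / 2) ^ (3.5:ℝ) / (1 - γ)) ^ (((d:ℝ) - 1) / 2) ≤
      (2:ℝ) ^ (-(d:ℝ)) * (regIncBeta (1 - γ ^ 2) (((d:ℝ) - 1) / 2) (1 / 2))⁻¹ := by
  obtain ⟨hγ0, hγ1⟩ := hγ
  have hd5 : (5:ℝ) ≤ (d:ℝ) := by exact_mod_cast hd
  set a : ℝ := ((d:ℝ) - 1)/2 with ha
  have ha2 : (2:ℝ) ≤ a := by rw [ha]; linarith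
  have hp0 : (0:ℝ) < a - 1 := by linarith
  set x : ℝ := 1 - γ^2 with hx
  have hx0 : 0 < x := by rw [hx]; nlinarith
  have hx1 : x < 1 := by rw [hx]; nlinarith
  have h1γ : (0:ℝ) < 1 - γ := by linarith
  have h1γ' : (0:ℝ) < 1 + γ := by linarith
  have hexp : ∀ y : ℝ, incBeta y a (1/2) = ∫ t in (0:ℝ)..y, IncBetaAux.f (a-1) t := by
    intro y
    unfold incBeta IncBetaAux.f
    simp only [show (1:ℝ)/2 - 1 = -(1:ℝ)/2 from by norm_num]
  set N : ℝ := incBeta x a (1/2) with hN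
  set D : ℝ := incBeta 1 a (1/2) with hD
  -- numerator upper bound
  have hNub : N ≤ x^a * (a*γ)⁻¹ := by
    rw [hN, hexp x]
    have hmono : (∫ t in (0:ℝ)..x, IncBetaAux.f (a-1) t)
        ≤ ∫ t in (0:ℝ)..x, t^(a-1) * γ⁻¹ := by
      apply intervalIntegral.integral_mono_on hx0.le (integrable_f _ hp0.le _ _)
        ((intervalIntegral.intervalIntegrable_rpow' (by linarith)).mul_const γ⁻¹)
      intro t ht
      unfold IncBetaAux.f
      apply mul_le_mul_of_nonneg_left _ (Real.rpow_nonneg ht.1 _)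
      have h1 : γ^2 ≤ 1 - t := by have := ht.2; rw [hx] at this; linarith
      calc (1-t) ^ (-(1:ℝ)/2) ≤ (γ^2) ^ (-(1:ℝ)/2) :=
            Real.rpow_le_rpow_of_nonpos (by positivity) h1 (by norm_num)
      _ = γ⁻¹ := by
          rw [show -(1:ℝ)/2 = -(1/2) from by norm_num, Real.rpow_neg (by positivity),
            ← Real.sqrt_eq_rpow, Real.sqrt_sq hγ0.le]
    have heval : (∫ t in (0:ℝ)..x, t^(a-1) * γ⁻¹) = x^a * (a*γ)⁻¹ := by
      rw [intervalIntegral.integral_mul_const, integral_rpow (Or.inl (by linarith))]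
      rw [show a - 1 + 1 = a from by ring, Real.zero_rpow (by linarith)]
      rw [mul_inv]
      ring
    linarith [hmono, heval ▸ hmono]
  -- numerator positivity
  have hNpos : 0 < N := by
    rw [hN, hexp x]
    have heval : (∫ t in (0:ℝ)..x, t^(a-1)) = x^a / a := by
      rw [integral_rpow (Or.inl (by linarith))]
      rw [show a - 1 + 1 = a from by ring, Real.zero_rpow (by linarith)]
      ring
    have hmono : (∫ t in (0:ℝ)..x, t^(a-1))
        ≤ ∫ t in (0:ℝ)..x, IncBetaAux.f (a-1) t := by
      apply intervalIntegral.integral_mono_on hx0.le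
        (intervalIntegral.intervalIntegrable_rpow' (by linarith))
        (integrable_f _ hp0.le _ _)
      intro t ht
      unfold IncBetaAux.f
      nth_rewrite 1 [← mul_one (t ^ (a-1))]
      apply mul_le_mul_of_nonneg_left _ (Real.rpow_nonneg ht.1 _)
      have hb : (0:ℝ) < 1 - t := by linarith [ht.2]
      exact Real.one_le_rpow_of_pos_of_le_one_of_nonpos hb (by linarith [ht.1]) (by norm_num)
    have hpos : (0:ℝ) < x^a / a := by
      have := Real.rpow_pos_of_pos hx0 a
      positivity
    linarith [heval ▸ hmono]
  -- key denominator bound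
  have hKey : Real.sqrt d * (2:ℝ) ^ (((5:ℝ) - (d:ℝ))/4) ≤ a * D := by
    rw [hD, hexp 1, ha]
    exact IncBetaAux.key d hd
  have hDpos : 0 < D := by
    have hW : (0:ℝ) < Real.sqrt d * (2:ℝ) ^ (((5:ℝ) - (d:ℝ))/4) := by
      have hd0 : (0:ℝ) < (d:ℝ) := by linarith
      have := Real.sqrt_pos.mpr hd0
      have := Real.rpow_pos_of_pos (show (0:ℝ) < 2 by norm_num) (((5:ℝ) - (d:ℝ))/4)
      positivity
    rcases lt_or_ge 0 D with h | h
    · exact h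
    · exfalso
      nlinarith [hW, hKey, ha2, h]
  -- step : D/N lower bound
  have hxa : 0 < x^a := Real.rpow_pos_of_pos hx0 a
  have haγ : (0:ℝ) < a*γ := by positivity
  have hstep : D * ((a*γ) * (x^a)⁻¹) ≤ D / N := by
    rw [div_eq_mul_inv]
    apply mul_le_mul_of_nonneg_left _ hDpos.le
    calc (a*γ) * (x^a)⁻¹ = (x^a * (a*γ)⁻¹)⁻¹ := by
          rw [mul_inv, inv_inv, mul_comm]
    _ ≤ N⁻¹ := inv_anti₀ hNpos hNub
  -- exponent identities
  have e3 : (((1:ℝ)/2) ^ (3.5:ℝ))^a = (2:ℝ)^(-(3.5*a)) := by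
    rw [show ((1:ℝ)/2) = (2:ℝ)^(-1:ℝ) from by
        rw [Real.rpow_neg_one]; norm_num,
      ← Real.rpow_mul (by norm_num), ← Real.rpow_mul (by norm_num)]
    norm_num
  have IDent : (2:ℝ)^(-(3.5*a)) * (2:ℝ)^a = (2:ℝ)^(-(d:ℝ)) * (2:ℝ)^(((5:ℝ)-(d:ℝ))/4) := by
    rw [← Real.rpow_add (by norm_num), ← Real.rpow_add (by norm_num)]
    congr 1
    rw [ha]
    norm_num
    ring
  have hP1 : (0:ℝ) < (1-γ)^a := Real.rpow_pos_of_pos h1γ a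
  have hP2 : (0:ℝ) < (1+γ)^a := Real.rpow_pos_of_pos h1γ' a
  have hγ2a : (1+γ)^a ≤ (2:ℝ)^a := Real.rpow_le_rpow h1γ'.le (by linarith) (by linarith)
  have hxfact : x^a = (1-γ)^a * (1+γ)^a := by
    rw [← Real.mul_rpow h1γ.le h1γ'.le]
    congr 1
    rw [hx]; ring
  have hEpos : (0:ℝ) < (2:ℝ)^(-(d:ℝ)) := Real.rpow_pos_of_pos (by norm_num) _
  have CORE : Real.sqrt d * (2:ℝ)^(-(3.5*a)) * (1+γ)^a
      ≤ (2:ℝ)^(-(d:ℝ)) * (a*D) := by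
    have hT : (0:ℝ) < (2:ℝ)^(-(3.5*a)) := Real.rpow_pos_of_pos (by norm_num) _
    calc Real.sqrt d * (2:ℝ)^(-(3.5*a)) * (1+γ)^a
        ≤ Real.sqrt d * (2:ℝ)^(-(3.5*a)) * (2:ℝ)^a := by
          apply mul_le_mul_of_nonneg_left hγ2a
          positivity
    _ = Real.sqrt d * ((2:ℝ)^(-(d:ℝ)) * (2:ℝ)^(((5:ℝ)-(d:ℝ))/4)) := by
          rw [mul_assoc, IDent]
    _ = (2:ℝ)^(-(d:ℝ)) * (Real.sqrt d * (2:ℝ)^(((5:ℝ)-(d:ℝ))/4)) := by ring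
    _ ≤ (2:ℝ)^(-(d:ℝ)) * (a*D) := mul_le_mul_of_nonneg_left hKey hEpos.le
  have MAIN : γ * Real.sqrt d * ((2:ℝ)^(-(3.5*a)) / (1-γ)^a)
      ≤ (2:ℝ)^(-(d:ℝ)) * (D * ((a*γ) * (x^a)⁻¹)) := by
    rw [hxfact]
    have hq : (0:ℝ) ≤ γ / ((1-γ)^a * (1+γ)^a) := by positivity
    have h := mul_le_mul_of_nonneg_left CORE hq
    calc γ * Real.sqrt d * ((2:ℝ)^(-(3.5*a)) / (1-γ)^a)
        = γ / ((1-γ)^a * (1+γ)^a) * (Real.sqrt d * (2:ℝ)^(-(3.5*a)) * (1+γ)^a) := by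
          field_simp
    _ ≤ γ / ((1-γ)^a * (1+γ)^a) * ((2:ℝ)^(-(d:ℝ)) * (a*D)) := h
    _ = (2:ℝ)^(-(d:ℝ)) * (D * ((a*γ) * ((1-γ)^a * (1+γ)^a)⁻¹)) := by
          field_simp
  calc γ * Real.sqrt d * (((1:ℝ)/2) ^ (3.5:ℝ) / (1 - γ)) ^ a
      = γ * Real.sqrt d * ((2:ℝ)^(-(3.5*a)) / (1-γ)^a) := by
        rw [Real.div_rpow (Real.rpow_nonneg (by norm_num) _) h1γ.le, e3]
  _ ≤ (2:ℝ)^(-(d:ℝ)) * (D * ((a*γ) * (x^a)⁻¹)) := MAIN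
  _ ≤ (2:ℝ)^(-(d:ℝ)) * (D / N) := mul_le_mul_of_nonneg_left hstep hEpos.le
  _ = (2:ℝ)^(-(d:ℝ)) * (regIncBeta x a (1/2))⁻¹ := by
        rw [regIncBeta, inv_div]
end

section
/- Fix γ ∈ (0,1) and a unit vector w ∈ R^d. With T and the dynamics as above, the function Q₋(a) = -⟨a,w⟩ satisfies Q₋(a) = r₋(a) + γ·Q₋(T(a)) for every a in the closed unit ball, where r₋(a) = -(1-γ)⟨a,w⟩ if |⟨a,w⟩| ≥ γ and r₋(a) = 0 otherwise. -/
/-- Bellman evaluation equation on the negated MDP: `Q₋(a) = -⟨a,w⟩` satisfies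
`Q₋(a) = r₋(a) + γ Q₋(T(a))` on the closed unit ball. -/
theorem bellman_evaluation_minus (d : ℕ) (γ : ℝ) (hγ : γ ∈ Set.Ioo (0:ℝ) 1)
    (w : EuclideanSpace ℝ (Fin d)) (hw : ‖w‖ = 1)
    (T : EuclideanSpace ℝ (Fin d) → EuclideanSpace ℝ (Fin d))
    (hT : ∀ a, T a =
      if |(inner ℝ a w : ℝ)| < γ then ((1 / γ) * (inner ℝ a w : ℝ)) • w else a)
    (r : EuclideanSpace ℝ (Fin d) → ℝ)
    (hr : ∀ a, r a = if γ ≤ |(inner ℝ a w : ℝ)| then -((1 - γ) * (inner ℝ a w : ℝ)) else 0) :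
    ∀ a : EuclideanSpace ℝ (Fin d), ‖a‖ ≤ 1 →
      -(inner ℝ a w : ℝ) = r a + γ * -(inner ℝ (T a) w : ℝ) := by
  intro a _
  rw [hT a, hr a]
  have hww : (inner ℝ w w : ℝ) = 1 := by
    rw [real_inner_self_eq_norm_sq, hw]; norm_num
  by_cases h : |(inner ℝ a w : ℝ)| < γ
  · rw [if_pos h, if_neg (not_le.mpr h), real_inner_smul_left, hww]
    have hγ0 : γ ≠ 0 := ne_of_gt hγ.1
    field_simp
    ring
  · rw [if_neg h, if_pos (not_lt.mp h)]
    ring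
end
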